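/- Let M be a 4×4 real symmetric positive semidefinite matrix with all diagonal entries equal to 1, and let V ∈ ℝ⁴ with entries c₁, c₂, c₃, c₄ be such that M − V Vᵀ is positive semidefinite. If M₁₂ = M₃₄, then writing σᵢ = √(1 − cᵢ²), all three Tsirelson–Landau–Masanes inequalities hold: |c₁c₂ − c₃c₄| ≤ σ₁σ₂ + σ₃σ₄, |c₁c₃ − c₂c₄| ≤ σ₁σ₃ + σ₂σ₄, and |c₂c₃ − c₁c₄| ≤ σ₂σ₃ + σ₁σ₄. -/

import Mathlib

private lemma sq_le_of_quad {u q v : ℝ}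
    (h : ∀ t : ℝ, 0 ≤ u * (t * t) + (2 * q) * t + v) : q ^ 2 ≤ u * v := by
  have hd := discrim_le_zero h
  unfold discrim at hd
  nlinarith

private lemma abs_le_of_sq_le' {a b : ℝ} (hb : 0 ≤ b) (h : a ^ 2 ≤ b ^ 2) : |a| ≤ b := by
  rw [abs_le]
  constructor <;> nlinarith [sq_nonneg (a + b), sq_nonneg (a - b)]

/-- For a 4×4 real symmetric PSD matrix `M` with unit diagonal and a
correlator vector `V` with `M - V Vᵀ` PSD, if `M₁₂ = M₃₄` then all three
Tsirelson–Landau–Masanes inequalities hold. -/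
theorem tlm_of_covariance
    (M : Matrix (Fin 4) (Fin 4) ℝ) (hM : M.PosSemidef)
    (hdiag : ∀ i, M i i = 1)
    (V : Fin 4 → ℝ)
    (hC : (M - Matrix.vecMulVec V V).PosSemidef)
    (hMeq : M 0 1 = M 2 3) :
    |V 0 * V 1 - V 2 * V 3| ≤
      Real.sqrt (1 - (V 0) ^ 2) * Real.sqrt (1 - (V 1) ^ 2) +
      Real.sqrt (1 - (V 2) ^ 2) * Real.sqrt (1 - (V 3) ^ 2) ∧
    |V 0 * V 2 - V 1 * V 3| ≤
      Real.sqrt (1 - (V 0) ^ 2) * Real.sqrt (1 - (V 2) ^ 2) +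
      Real.sqrt (1 - (V 1) ^ 2) * Real.sqrt (1 - (V 3) ^ 2) ∧
    |V 1 * V 2 - V 0 * V 3| ≤
      Real.sqrt (1 - (V 1) ^ 2) * Real.sqrt (1 - (V 2) ^ 2) +
      Real.sqrt (1 - (V 0) ^ 2) * Real.sqrt (1 - (V 3) ^ 2) := by
  set C := M - Matrix.vecMulVec V V with hCdef
  have hCsym : ∀ i j, C j i = C i j := by
    intro i j
    have h := hC.1.apply i j
    simpa using h
  -- diagonal entries of C
  have hCdiag : ∀ i, C i i = 1 - V i ^ 2 := by
    intro i
    simp [hCdef, Matrix.sub_apply, Matrix.vecMulVec_apply, hdiag i]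
    ring
  -- diagonal entries nonneg
  have hd0 := (Matrix.posSemidef_iff_dotProduct_mulVec.mp hC).2 ![1,0,0,0]
  have hd1 := (Matrix.posSemidef_iff_dotProduct_mulVec.mp hC).2 ![0,1,0,0]
  have hd2 := (Matrix.posSemidef_iff_dotProduct_mulVec.mp hC).2 ![0,0,1,0]
  have hd3 := (Matrix.posSemidef_iff_dotProduct_mulVec.mp hC).2 ![0,0,0,1]
  simp [dotProduct, Matrix.mulVec, Fin.sum_univ_four] at hd0 hd1 hd2 hd3
  -- the sigma_i
  set s0 := Real.sqrt (1 - (V 0) ^ 2) with hs0def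
  set s1 := Real.sqrt (1 - (V 1) ^ 2) with hs1def
  set s2 := Real.sqrt (1 - (V 2) ^ 2) with hs2def
  set s3 := Real.sqrt (1 - (V 3) ^ 2) with hs3def
  have hs0n : 0 ≤ s0 := Real.sqrt_nonneg _
  have hs1n : 0 ≤ s1 := Real.sqrt_nonneg _
  have hs2n : 0 ≤ s2 := Real.sqrt_nonneg _
  have hs3n : 0 ≤ s3 := Real.sqrt_nonneg _
  have hs0 : s0 ^ 2 = 1 - (V 0) ^ 2 := Real.sq_sqrt (by rw [← hCdiag 0]; exact hd0)
  have hs1 : s1 ^ 2 = 1 - (V 1) ^ 2 := Real.sq_sqrt (by rw [← hCdiag 1]; exact hd1)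
  have hs2 : s2 ^ 2 = 1 - (V 2) ^ 2 := Real.sq_sqrt (by rw [← hCdiag 2]; exact hd2)
  have hs3 : s3 ^ 2 = 1 - (V 3) ^ 2 := Real.sq_sqrt (by rw [← hCdiag 3]; exact hd3)
  -- off-diagonal bounds for the pairs (0,1) and (2,3)
  have h01 : (C 0 1) ^ 2 ≤ C 0 0 * C 1 1 := by
    apply sq_le_of_quad
    intro t
    have h := (Matrix.posSemidef_iff_dotProduct_mulVec.mp hC).2 ![t,1,0,0]
    simp [dotProduct, Matrix.mulVec, Fin.sum_univ_four] at h
    rw [hCsym 0 1] at h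
    nlinarith [h]
  have h23 : (C 2 3) ^ 2 ≤ C 2 2 * C 3 3 := by
    apply sq_le_of_quad
    intro t
    have h := (Matrix.posSemidef_iff_dotProduct_mulVec.mp hC).2 ![0,0,t,1]
    simp [dotProduct, Matrix.mulVec, Fin.sum_univ_four] at h
    rw [hCsym 2 3] at h
    nlinarith [h]
  have hb01 : |C 0 1| ≤ s0 * s1 := by
    apply abs_le_of_sq_le' (mul_nonneg hs0n hs1n)
    calc (C 0 1)^2 ≤ C 0 0 * C 1 1 := h01
      _ = (s0 * s1) ^ 2 := by rw [hCdiag 0, hCdiag 1, ← hs0, ← hs1]; ring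
  have hb23 : |C 2 3| ≤ s2 * s3 := by
    apply abs_le_of_sq_le' (mul_nonneg hs2n hs3n)
    calc (C 2 3)^2 ≤ C 2 2 * C 3 3 := h23
      _ = (s2 * s3) ^ 2 := by rw [hCdiag 2, hCdiag 3, ← hs2, ← hs3]; ring
  -- key relation from hMeq
  have hrel : V 0 * V 1 - V 2 * V 3 = C 2 3 - C 0 1 := by
    simp only [hCdef, Matrix.sub_apply, Matrix.vecMulVec_apply]
    rw [hMeq]
    ring
  -- first inequality
  have goal1 : |V 0 * V 1 - V 2 * V 3| ≤ s0 * s1 + s2 * s3 := by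
    rw [hrel]
    calc |C 2 3 - C 0 1| ≤ |C 2 3| + |C 0 1| := abs_sub _ _
      _ ≤ s2 * s3 + s0 * s1 := add_le_add hb23 hb01
      _ = s0 * s1 + s2 * s3 := by ring
  have hF : 0 ≤ (s0 * s1 + s2 * s3) ^ 2 - (V 0 * V 1 - V 2 * V 3) ^ 2 := by
    have h := abs_le.mp goal1
    have h2 := sq_le_sq' h.1 h.2
    linarith
  refine ⟨goal1, ?_, ?_⟩
  · -- second inequality
    apply abs_le_of_sq_le' (add_nonneg (mul_nonneg hs0n hs2n) (mul_nonneg hs1n hs3n))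
    have hid : (s0 * s2 + s1 * s3) ^ 2 - (V 0 * V 2 - V 1 * V 3) ^ 2
        = (s0 * s1 + s2 * s3) ^ 2 - (V 0 * V 1 - V 2 * V 3) ^ 2 := by
      linear_combination (s2^2 - s1^2) * hs0 + (s3^2 - (1 - (V 0)^2)) * hs1
        + ((1 - (V 0)^2) - s3^2) * hs2 + ((1 - (V 1)^2) - (1 - (V 2)^2)) * hs3
    linarith [hF, hid]
  · -- third inequality
    apply abs_le_of_sq_le' (add_nonneg (mul_nonneg hs1n hs2n) (mul_nonneg hs0n hs3n))
    have hid : (s1 * s2 + s0 * s3) ^ 2 - (V 1 * V 2 - V 0 * V 3) ^ 2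
        = (s0 * s1 + s2 * s3) ^ 2 - (V 0 * V 1 - V 2 * V 3) ^ 2 := by
      linear_combination (s2^2 - s0^2) * hs1 + (s3^2 - (1 - (V 1)^2)) * hs0
        + ((1 - (V 1)^2) - s3^2) * hs2 + ((1 - (V 0)^2) - (1 - (V 2)^2)) * hs3
    linarith [hF, hid]
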